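/- Let $I \subset R = K[x_1,\ldots,x_n]$ be a square-free monomial ideal and suppose $\mathfrak{p} \in \mathrm{Ass}(R/I^s) \setminus \mathrm{Min}(I)$ for some $s > 1$, and let $x_i \in \mathfrak{p}$. Then there exists $\mathfrak{q} \in \mathrm{Min}(I)$ with $x_i \in \mathfrak{q}$ and $\mathfrak{q} \subsetneq \mathfrak{p}$. -/

import Mathlib

open MvPolynomial

/-- A square-free monomial ideal: generated by square-free monomials. -/
def IsSqFreeMonomialIdeal {n : ℕ} {K : Type*} [Field K]
    (I : Ideal (MvPolynomial (Fin n) K)) : Prop :=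
  ∃ S : Set (Fin n →₀ ℕ), (∀ d ∈ S, ∀ i, d i ≤ 1) ∧
    I = Ideal.span ((fun d => (monomial d (1 : K) : MvPolynomial (Fin n) K)) '' S)

section AuxStmt14
open Pointwise
namespace Stmt14Aux

variable {n : ℕ} {K : Type*} [Field K]

/-- The prime ideal generated by the variables in `W`. -/
noncomputable def PW (W : Finset (Fin n)) : Ideal (MvPolynomial (Fin n) K) :=
  Ideal.span ((fun j => (X j : MvPolynomial (Fin n) K)) '' (W : Set (Fin n)))

/-- Substitution killing the variables in `W`. -/
noncomputable def killW (W : Finset (Fin n)) :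
    MvPolynomial (Fin n) K →ₐ[K] MvPolynomial (Fin n) K :=
  aeval (fun j => if j ∈ W then 0 else X j)

theorem sub_killW_mem (W : Finset (Fin n)) (f : MvPolynomial (Fin n) K) :
    f - killW W f ∈ (PW W : Ideal (MvPolynomial (Fin n) K)) := by
  induction f using MvPolynomial.induction_on with
  | C a => simp [killW, PW]
  | add f g hf hg =>
      have : f + g - killW W (f + g) = (f - killW W f) + (g - killW W g) := by
        rw [map_add]; ring
      rw [this]; exact add_mem hf hg
  | mul_X f j hf =>
      by_cases hj : j ∈ W
      · have hXj : (X j : MvPolynomial (Fin n) K) ∈ (PW W : Ideal (MvPolynomial (Fin n) K)) :=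
          Ideal.subset_span ⟨j, by simpa using hj, rfl⟩
        have : killW W (f * X j) = 0 := by
          rw [map_mul]
          simp [killW, hj]
        rw [this, sub_zero]
        exact Ideal.mul_mem_left _ _ hXj
      · have hk : killW W (X j) = (X j : MvPolynomial (Fin n) K) := by simp [killW, hj]
        have : f * X j - killW W (f * X j) = (f - killW W f) * X j := by
          rw [map_mul, hk]; ring
        rw [this]
        exact Ideal.mul_mem_right _ _ hf

theorem PW_eq_ker (W : Finset (Fin n)) :
    (PW W : Ideal (MvPolynomial (Fin n) K)) = RingHom.ker (killW W).toRingHom := by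
  apply le_antisymm
  · rw [PW, Ideal.span_le]
    rintro - ⟨j, hj, rfl⟩
    simp only [SetLike.mem_coe, RingHom.mem_ker, AlgHom.toRingHom_eq_coe, RingHom.coe_coe]
    simp [killW, Finset.mem_coe.mp hj]
  · intro f hf
    have h0 : killW W f = 0 := hf
    have := sub_killW_mem W f
    rwa [h0, sub_zero] at this

theorem PW_isPrime (W : Finset (Fin n)) :
    (PW W : Ideal (MvPolynomial (Fin n) K)).IsPrime := by
  rw [PW_eq_ker]
  exact RingHom.ker_isPrime _

theorem X_mem_PW_iff (W : Finset (Fin n)) (j : Fin n) :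
    (X j : MvPolynomial (Fin n) K) ∈ (PW W : Ideal (MvPolynomial (Fin n) K)) ↔ j ∈ W := by
  constructor
  · intro h
    by_contra hj
    rw [PW_eq_ker] at h
    have h0 : killW W (X j) = 0 := h
    rw [show (killW W (X j) : MvPolynomial (Fin n) K) = X j by simp [killW, hj]] at h0
    exact X_ne_zero j h0
  · intro hj
    exact Ideal.subset_span ⟨j, by simpa using hj, rfl⟩

theorem monomial_mem_PW_iff (W : Finset (Fin n)) (d : Fin n →₀ ℕ) :
    (monomial d (1 : K)) ∈ (PW W : Ideal (MvPolynomial (Fin n) K)) ↔ ∃ j ∈ W, d j ≠ 0 := by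
  have him : ((fun j => (X j : MvPolynomial (Fin n) K)) '' (W : Set (Fin n)))
      = ((fun e => (monomial e (1 : K))) '' ((fun j => Finsupp.single j 1) '' (W : Set (Fin n)))) := by
    rw [Set.image_image]
    rfl
  classical
  rw [PW, him, mem_ideal_span_monomial_image]
  constructor
  · intro h
    obtain ⟨e, ⟨j, hj, rfl⟩, hle⟩ := h d (by simp [mem_support_iff])
    exact ⟨j, Finset.mem_coe.mp hj, by
      have := Finsupp.single_le_iff.mp hle
      omega⟩
  · intro ⟨j, hj, hdj⟩ m hm
    rw [support_monomial, if_neg one_ne_zero] at hm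
    rw [Finset.mem_singleton] at hm
    subst hm
    exact ⟨Finsupp.single j 1, ⟨j, hj, rfl⟩, Finsupp.single_le_iff.mpr (by omega)⟩


/-- Exponents of `k`-fold products of monomials with exponents in `S`. -/
def ExpSet (S : Set (Fin n →₀ ℕ)) : ℕ → Set (Fin n →₀ ℕ)
  | 0 => {0}
  | k + 1 => S + ExpSet S k

theorem span_monomial_pow (S : Set (Fin n →₀ ℕ)) (k : ℕ) :
    (Ideal.span ((fun d => (monomial d (1 : K) : MvPolynomial (Fin n) K)) '' S)) ^ k
      = Ideal.span ((fun d => (monomial d (1 : K) : MvPolynomial (Fin n) K)) '' ExpSet S k) := by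
  induction k with
  | zero =>
      rw [pow_zero, ExpSet]
      simp [Set.image_singleton, Ideal.span_singleton_one]
  | succ k ih =>
      rw [pow_succ', ih, Ideal.span_mul_span']
      congr 1
      show _ * _ = _ '' (S + ExpSet S k)
      ext x
      constructor
      · rintro ⟨-, ⟨a, ha, rfl⟩, -, ⟨b, hb, rfl⟩, rfl⟩
        exact ⟨a + b, Set.mem_add.mpr ⟨a, ha, b, hb, rfl⟩, by simp [monomial_mul]⟩
      · rintro ⟨c, hc, rfl⟩
        obtain ⟨a, ha, b, hb, rfl⟩ := Set.mem_add.mp hc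
        exact ⟨_, ⟨a, ha, rfl⟩, _, ⟨b, hb, rfl⟩, by simp [monomial_mul]⟩

theorem expSet_mono {S S' : Set (Fin n →₀ ℕ)} (h : S ⊆ S') (k : ℕ) :
    ExpSet S k ⊆ ExpSet S' k := by
  induction k with
  | zero => exact le_rfl
  | succ k ih =>
      intro x hx
      obtain ⟨a, ha, b, hb, rfl⟩ := Set.mem_add.mp hx
      exact Set.mem_add.mpr ⟨a, h ha, b, ih hb, rfl⟩

theorem expSet_erase {S : Set (Fin n →₀ ℕ)} {i : Fin n}
    (hS : ∀ ν ∈ S, Finsupp.erase i ν ∈ S) (k : ℕ) :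
    ∀ ε ∈ ExpSet S k, Finsupp.erase i ε ∈ ExpSet S k := by
  induction k with
  | zero =>
      intro ε hε
      rw [Set.mem_singleton_iff.mp hε]
      simp [ExpSet]
  | succ k ih =>
      intro ε hε
      obtain ⟨a, ha, b, hb, rfl⟩ := Set.mem_add.mp hε
      rw [Finsupp.erase_add]
      exact Set.mem_add.mpr ⟨_, hS a ha, _, ih b hb, rfl⟩

theorem expSet_translate {S A : Set (Fin n →₀ ℕ)} {gE : Fin n →₀ ℕ}
    (h : ∀ ν ∈ A, ∃ d ∈ S, d ≤ ν + gE) (k : ℕ) :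
    ∀ ε ∈ ExpSet A k, ∃ ε' ∈ ExpSet S k, ε' ≤ ε + k • gE := by
  induction k with
  | zero =>
      intro ε hε
      exact ⟨0, rfl, by simp⟩
  | succ k ih =>
      intro ε hε
      obtain ⟨a, ha, b, hb, rfl⟩ := Set.mem_add.mp hε
      obtain ⟨d, hd, hdle⟩ := h a ha
      obtain ⟨ε', hε', hle⟩ := ih b hb
      refine ⟨d + ε', Set.mem_add.mpr ⟨d, hd, ε', hε', rfl⟩, ?_⟩
      calc d + ε' ≤ (a + gE) + (b + k • gE) := add_le_add hdle hle
      _ = (a + b) + (k + 1) • gE := by rw [succ_nsmul]; abel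

theorem prod_X_eq_monomial {α : Type*} (F : Finset α) (h : α → Fin n) :
    (∏ a ∈ F, (X (h a) : MvPolynomial (Fin n) K))
      = monomial (∑ a ∈ F, Finsupp.single (h a) 1) 1 := by
  classical
  induction F using Finset.induction_on with
  | empty => simp
  | insert _ _ hne ih =>
      rw [Finset.prod_insert hne, Finset.sum_insert hne, ih,
        show (X (h _) : MvPolynomial (Fin n) K) = monomial (Finsupp.single (h _) 1) 1 from rfl,
        monomial_mul, one_mul]




/-- `W` is a vertex cover of the monomials with exponents in `S`. -/
def Cover (S : Set (Fin n →₀ ℕ)) (W : Finset (Fin n)) : Prop :=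
  ∀ d ∈ S, ∃ j ∈ W, d j ≠ 0

/-- `W` is a minimal vertex cover. -/
def MinCov (S : Set (Fin n →₀ ℕ)) (W : Finset (Fin n)) : Prop :=
  Cover S W ∧ ∀ W' ⊆ W, Cover S W' → W' = W

theorem exists_minCov_subset {S : Set (Fin n →₀ ℕ)} {W : Finset (Fin n)} (h : Cover S W) :
    ∃ W' ⊆ W, MinCov S W' := by
  classical
  have hne : (W.powerset.filter (fun W' => Cover S W')).Nonempty :=
    ⟨W, by simp [Finset.mem_filter, Finset.mem_powerset, h]⟩
  obtain ⟨W₀, hW₀, hmin⟩ := Finset.exists_min_image _ Finset.card hne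
  rw [Finset.mem_filter, Finset.mem_powerset] at hW₀
  refine ⟨W₀, hW₀.1, hW₀.2, fun W' hW'sub hW'cov => ?_⟩
  have hW'mem : W' ∈ W.powerset.filter (fun W' => Cover S W') := by
    rw [Finset.mem_filter, Finset.mem_powerset]
    exact ⟨hW'sub.trans hW₀.1, hW'cov⟩
  exact Finset.eq_of_subset_of_card_le hW'sub (hmin W' hW'mem)

theorem exists_var_mem {q : Ideal (MvPolynomial (Fin n) K)} (hq : q.IsPrime) {d : Fin n →₀ ℕ}
    (hd : monomial d (1 : K) ∈ q) : ∃ j, d j ≠ 0 ∧ (X j : MvPolynomial (Fin n) K) ∈ q := by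
  rw [monomial_eq, C_1, one_mul, Finsupp.prod] at hd
  obtain ⟨j, hj, hXj⟩ := (Ideal.IsPrime.prod_mem_iff (hp := hq)).mp hd
  exact ⟨j, Finsupp.mem_support_iff.mp hj, hq.mem_of_pow_mem _ hXj⟩

theorem minCov_mem_minimalPrimes {S : Set (Fin n →₀ ℕ)} {W : Finset (Fin n)}
    (hW : MinCov S W) :
    (PW W : Ideal (MvPolynomial (Fin n) K)) ∈
      (Ideal.span ((fun d => (monomial d (1 : K) : MvPolynomial (Fin n) K)) '' S)).minimalPrimes := by
  classical
  constructor
  · refine ⟨PW_isPrime W, ?_⟩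
    rw [Ideal.span_le]
    rintro - ⟨d, hd, rfl⟩
    obtain ⟨j, hjW, hdj⟩ := hW.1 d hd
    exact (monomial_mem_PW_iff W d).mpr ⟨j, hjW, hdj⟩
  · rintro q ⟨hq, hIq⟩ hqle
    have hW' : W.filter (fun j => (X j : MvPolynomial (Fin n) K) ∈ q) = W := by
      apply hW.2 _ (Finset.filter_subset _ _)
      intro d hd
      have hdq : monomial d (1 : K) ∈ q := hIq (Ideal.subset_span ⟨d, hd, rfl⟩)
      obtain ⟨j, hdj, hXj⟩ := exists_var_mem hq hdq
      have hjW : j ∈ W := (X_mem_PW_iff W j).mp (hqle hXj)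
      exact ⟨j, Finset.mem_filter.mpr ⟨hjW, hXj⟩, hdj⟩
    rw [PW, Ideal.span_le]
    rintro - ⟨j, hj, rfl⟩
    have hjW : j ∈ W := Finset.mem_coe.mp hj
    rw [← hW'] at hjW
    exact (Finset.mem_filter.mp hjW).2

theorem cover_dual {S : Set (Fin n →₀ ℕ)} {T : Finset (Fin n)}
    (hno : ∀ W, MinCov S W → ∃ j ∈ W, j ∈ T) :
    ∃ d ∈ S, ∀ j, d j ≠ 0 → j ∈ T := by
  classical
  by_contra h
  push_neg at h
  have hc : Cover S Tᶜ := by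
    intro d hd
    obtain ⟨j, hdj, hjT⟩ := h d hd
    exact ⟨j, Finset.mem_compl.mpr hjT, hdj⟩
  obtain ⟨W', hW'sub, hW'⟩ := exists_minCov_subset hc
  obtain ⟨j, hjW, hjT⟩ := hno W' hW'
  exact Finset.mem_compl.mp (hW'sub hjW) hjT



end Stmt14Aux

end AuxStmt14

/-- If `𝔭 ∈ Ass(R/I^s) \ Min(I)` for some `s > 1` and `x_i ∈ 𝔭`, then
there is `𝔮 ∈ Min(I)` with `x_i ∈ 𝔮` and `𝔮 ⊊ 𝔭`. -/
theorem stmt14 {n : ℕ} {K : Type*} [Field K]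
    (I : Ideal (MvPolynomial (Fin n) K)) (hI : IsSqFreeMonomialIdeal I)
    (s : ℕ) (hs : 1 < s)
    (p : Ideal (MvPolynomial (Fin n) K))
    (hAss : p ∈ associatedPrimes (MvPolynomial (Fin n) K)
      (MvPolynomial (Fin n) K ⧸ (I ^ s)))
    (hpmin : p ∉ I.minimalPrimes)
    (i : Fin n) (hi : (X i : MvPolynomial (Fin n) K) ∈ p) :
    ∃ q ∈ I.minimalPrimes, (X i : MvPolynomial (Fin n) K) ∈ q ∧ q < p := by
  classical
  obtain ⟨S, hSsf, hIS⟩ := hI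
  obtain ⟨hp, x, hx⟩ := isAssociatedPrime_iff.mp hAss
  obtain ⟨f, rfl⟩ := Ideal.Quotient.mk_surjective x
  -- membership in p is multiplying f into I^s
  have hmemp : ∀ r : MvPolynomial (Fin n) K, r ∈ p ↔ r * f ∈ I ^ s := by
    intro r
    rw [hx, Submodule.mem_colon_singleton, Submodule.mem_bot]
    have : r • (Ideal.Quotient.mk (I ^ s) f) = Ideal.Quotient.mk (I ^ s) (r * f) := rfl
    rw [this, Ideal.Quotient.eq_zero_iff_mem]
  -- membership criterion for powers of I
  have hcrit : ∀ (g : MvPolynomial (Fin n) K) (k : ℕ),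
      g ∈ I ^ k ↔ ∀ μ ∈ g.support, ∃ ε ∈ Stmt14Aux.ExpSet S k, ε ≤ μ := by
    intro g k
    rw [hIS, Stmt14Aux.span_monomial_pow, mem_ideal_span_monomial_image]
  by_contra hG
  push_neg at hG
  set V : Finset (Fin n) := Finset.univ.filter
    (fun j => (X j : MvPolynomial (Fin n) K) ∈ p) with hV
  have hiV : i ∈ V := Finset.mem_filter.mpr ⟨Finset.mem_univ _, hi⟩
  -- no minimal cover inside V contains i
  have WinP : ∀ W : Finset (Fin n), Stmt14Aux.MinCov S W → W ⊆ V → i ∉ W := by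
    intro W hW hWV hiW
    have hq : Stmt14Aux.PW W ∈ I.minimalPrimes := by
      rw [hIS]; exact Stmt14Aux.minCov_mem_minimalPrimes hW
    have hXi : (X i : MvPolynomial (Fin n) K) ∈ Stmt14Aux.PW W :=
      (Stmt14Aux.X_mem_PW_iff W i).mpr hiW
    have hle : Stmt14Aux.PW W ≤ p := by
      rw [Stmt14Aux.PW, Ideal.span_le]
      rintro - ⟨j, hj, rfl⟩
      exact (Finset.mem_filter.mp (hWV (Finset.mem_coe.mp hj))).2
    have hne : Stmt14Aux.PW W ≠ p := fun h => hpmin (h ▸ hq)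
    exact hG (Stmt14Aux.PW W) hq hXi (lt_of_le_of_ne hle hne)
  set Jset : Set (Fin n →₀ ℕ) :=
    {ν | ∀ W : Finset (Fin n), Stmt14Aux.MinCov S W → W ⊆ V → ∃ j, j ∈ W ∧ ν j ≠ 0} with hJset
  have hSJ : S ⊆ Jset := by
    intro d hd W hW hWV
    obtain ⟨j, hjW, hdj⟩ := hW.1 d hd
    exact ⟨j, hjW, hdj⟩
  have hJerase : ∀ ν ∈ Jset, Finsupp.erase i ν ∈ Jset := by
    intro ν hν W hW hWV
    obtain ⟨j, hjW, hνj⟩ := hν W hW hWV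
    have hji : j ≠ i := fun h => WinP W hW hWV (h ▸ hjW)
    exact ⟨j, hjW, by rwa [Finsupp.erase_ne hji]⟩
  -- choose a variable outside V for each minimal cover not inside V
  have hout : ∀ W : Finset (Fin n), ∃ j : Fin n,
      (Stmt14Aux.MinCov S W ∧ ¬ W ⊆ V) → (j ∈ W ∧ j ∉ V) := by
    intro W
    by_cases h : Stmt14Aux.MinCov S W ∧ ¬ W ⊆ V
    · obtain ⟨j, hjW, hjV⟩ : ∃ j ∈ W, j ∉ V := by
        by_contra h'
        push_neg at h'
        exact h.2 h'
      exact ⟨j, fun _ => ⟨hjW, hjV⟩⟩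
    · exact ⟨i, fun hc => absurd hc h⟩
  choose jW hjW using hout
  set outs : Finset (Finset (Fin n)) :=
    Finset.univ.filter (fun W => Stmt14Aux.MinCov S W ∧ ¬ W ⊆ V) with houts
  set gE : Fin n →₀ ℕ := ∑ W ∈ outs, Finsupp.single (jW W) 1 with hgE
  have hgp : (monomial gE (1 : K) : MvPolynomial (Fin n) K) ∉ p := by
    rw [hgE, ← Stmt14Aux.prod_X_eq_monomial outs jW]
    intro h
    obtain ⟨W, hWouts, hXmem⟩ := (Ideal.IsPrime.prod_mem_iff (hp := hp)).mp h
    have hWprop := (Finset.mem_filter.mp hWouts).2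
    exact (hjW W hWprop).2 (Finset.mem_filter.mpr ⟨Finset.mem_univ _, hXmem⟩)
  -- every element of Jset, translated by gE, dominates a generator
  have hC : ∀ ν ∈ Jset, ∃ d ∈ S, d ≤ ν + gE := by
    intro ν hν
    have hdual : ∀ W, Stmt14Aux.MinCov S W → ∃ j ∈ W, j ∈ (ν + gE).support := by
      intro W hW
      by_cases hWV : W ⊆ V
      · obtain ⟨j, hjW, hνj⟩ := hν W hW hWV
        refine ⟨j, hjW, Finsupp.mem_support_iff.mpr ?_⟩
        have : (ν + gE) j = ν j + gE j := Finsupp.add_apply ν gE j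
        omega
      · have hWo : W ∈ outs := Finset.mem_filter.mpr ⟨Finset.mem_univ _, hW, hWV⟩
        have h1 : Finsupp.single (jW W) 1 ≤ gE := by
          rw [hgE]
          exact Finset.single_le_sum (f := fun W => Finsupp.single (jW W) 1)
            (fun _ _ => zero_le) hWo
        have h2 : 1 ≤ gE (jW W) := by
          have := Finsupp.single_le_iff.mp h1
          omega
        refine ⟨jW W, (hjW W ⟨hW, hWV⟩).1, Finsupp.mem_support_iff.mpr ?_⟩
        have : (ν + gE) (jW W) = ν (jW W) + gE (jW W) := Finsupp.add_apply ν gE (jW W)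
        omega
    obtain ⟨d, hd, hsupp⟩ := Stmt14Aux.cover_dual hdual
    refine ⟨d, hd, Finsupp.le_def.mpr fun j => ?_⟩
    by_cases hdj : d j = 0
    · omega
    · have h1 : d j ≤ 1 := hSsf d hd j
      have h2 : (ν + gE) j ≠ 0 := Finsupp.mem_support_iff.mp (hsupp j hdj)
      omega
  -- the key exponent manipulation
  have h1 : (X i : MvPolynomial (Fin n) K) * f ∈ I ^ s := (hmemp _).mp hi
  have h2 : ∀ μ ∈ f.support, ∃ ε ∈ Stmt14Aux.ExpSet S s, ε ≤ s • gE + μ := by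
    intro μ hμ
    have hμ' : (Finsupp.single i 1 + μ) ∈ ((X i : MvPolynomial (Fin n) K) * f).support := by
      rw [mem_support_iff, coeff_X_mul]
      exact mem_support_iff.mp hμ
    obtain ⟨ε, hε, hle⟩ := (hcrit _ s).mp h1 _ hμ'
    have hεJ : ε ∈ Stmt14Aux.ExpSet Jset s := Stmt14Aux.expSet_mono hSJ s hε
    have hε2 : Finsupp.erase i ε ∈ Stmt14Aux.ExpSet Jset s :=
      Stmt14Aux.expSet_erase hJerase s ε hεJ
    have hle2 : Finsupp.erase i ε ≤ μ := by
      refine Finsupp.le_def.mpr fun j => ?_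
      by_cases hj : j = i
      · subst hj
        simp [Finsupp.erase_same]
      · rw [Finsupp.erase_ne hj]
        have h3 := Finsupp.le_def.mp hle j
        rw [Finsupp.add_apply, Finsupp.single_apply, if_neg (fun h => hj h.symm)] at h3
        omega
    obtain ⟨ε', hε', hle'⟩ := Stmt14Aux.expSet_translate hC s _ hε2
    refine ⟨ε', hε', hle'.trans ?_⟩
    calc Finsupp.erase i ε + s • gE ≤ μ + s • gE := add_le_add hle2 le_rfl
    _ = s • gE + μ := add_comm _ _
  have h3 : (monomial (s • gE) (1 : K) : MvPolynomial (Fin n) K) * f ∈ I ^ s := by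
    have hrepr : (monomial (s • gE) (1 : K) : MvPolynomial (Fin n) K) * f
        = ∑ μ ∈ f.support, monomial (s • gE + μ) (coeff μ f) := by
      conv_lhs => rw [f.as_sum]
      rw [Finset.mul_sum]
      refine Finset.sum_congr rfl fun μ hμ => ?_
      rw [monomial_mul, one_mul]
    rw [hrepr]
    apply Ideal.sum_mem
    intro μ hμ
    rw [hcrit]
    intro μ' hμ'
    rw [support_monomial, if_neg (mem_support_iff.mp hμ), Finset.mem_singleton] at hμ'
    subst hμ'
    exact h2 μ hμ
  have h4 : (monomial (s • gE) (1 : K) : MvPolynomial (Fin n) K) ∈ p := (hmemp _).mpr h3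
  have h5 : (monomial gE (1 : K) : MvPolynomial (Fin n) K) ^ s ∈ p := by
    rw [monomial_pow, one_pow]
    exact h4
  exact hgp (hp.mem_of_pow_mem s h5)
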